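/- Let S be a nonempty set and τ: S → {nontrivial monochromatic binary trees} a map such that all trees τ_a have the same number of leaves n ≥ 2. Then the forest-skein category F_τ presented by colours S and skein relations C_a(τ_a) = C_b(τ_b) for all a ≠ b in S (where C_a colours every vertex by a) satisfies Ore's property: every tree of F_τ is dominated by a tree all of whose carets are copies of the common tree t = C_a(τ_a). -/

import Mathlib

namespace ForestSkein

/-- A coloured finite rooted planar binary tree with colours in `S`. -/
inductive CTree (S : Type) : Type
  | leaf : CTree S
  | node : S → CTree S → CTree S → CTree S

namespace CTree

/-- Number of leaves of a coloured binary tree. -/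
def leaves {S : Type} : CTree S → ℕ
  | .leaf => 1
  | .node _ l r => leaves l + leaves r

/-- Graft a list of trees onto the leaves of a tree (vertical stacking). -/
def graft {S : Type} : CTree S → List (CTree S) → CTree S
  | .leaf, gs => gs.headD .leaf
  | .node c l r, gs => .node c (graft l (gs.take (leaves l))) (graft r (gs.drop (leaves l)))

/-- Relabel the colours of a tree along a map of colour sets. -/
def recolour {S S' : Type} (c : S → S') : CTree S → CTree S'
  | .leaf => .leaf
  | .node x l r => .node (c x) (recolour c l) (recolour c r)

end CTree

/-- A coloured forest: a finite list of coloured binary trees.  Its roots are the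
entries of the list, its leaves are the leaves of its trees. -/
abbrev Forest (S : Type) := List (CTree S)

/-- Total number of leaves of a forest. -/
def Forest.leaves {S : Type} (f : Forest S) : ℕ := (f.map CTree.leaves).sum

/-- Composition of forests: `Forest.comp f g` stacks `g` on top of `f`, attaching
the `j`-th root of `g` to the `j`-th leaf of `f` (meaningful when
`Forest.leaves f = g.length`). -/
def Forest.comp {S : Type} : Forest S → Forest S → Forest S
  | [], _ => []
  | t :: ts, g =>
      CTree.graft t (g.take (CTree.leaves t)) :: Forest.comp ts (g.drop (CTree.leaves t))

/-- The elementary forest `a_{j,n}` (1-indexed) with `n` roots, a single `a`-coloured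
caret at the `j`-th root, and all other trees trivial. -/
def elemForest {S : Type} (a : S) (j n : ℕ) : Forest S :=
  List.replicate (j - 1) CTree.leaf ++ [CTree.node a CTree.leaf CTree.leaf] ++
    List.replicate (n - j) CTree.leaf

/-- A set of skein relations consists of pairs of trees with equal numbers of leaves. -/
def LeafPres {S : Type} (R : CTree S → CTree S → Prop) : Prop :=
  ∀ t t' : CTree S, R t t' → CTree.leaves t = CTree.leaves t'

/-- The equivalence relation on coloured forests generated by a set `R` of skein
relations (pairs of trees), closed under composition and tensor product
(horizontal juxtaposition).  The quotient is the forest-skein category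
presented by `R`. -/
inductive SkeinEquiv {S : Type} (R : CTree S → CTree S → Prop) : Forest S → Forest S → Prop
  | of {t t' : CTree S} : R t t' → SkeinEquiv R [t] [t']
  | refl (f : Forest S) : SkeinEquiv R f f
  | symm {f g : Forest S} : SkeinEquiv R f g → SkeinEquiv R g f
  | trans {f g h : Forest S} : SkeinEquiv R f g → SkeinEquiv R g h → SkeinEquiv R f h
  | comp {f f' g g' : Forest S} :
      SkeinEquiv R f f' → SkeinEquiv R g g' → SkeinEquiv R (Forest.comp f g) (Forest.comp f' g')
  | tensor {f f' g g' : Forest S} :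
      SkeinEquiv R f f' → SkeinEquiv R g g' → SkeinEquiv R (f ++ g) (f' ++ g')

/-- Left-cancellativity of a forest-skein category given by the equivalence `E` on
forests: `f ∘ g = f ∘ h` implies `g = h`. -/
def LeftCancel {S : Type} (E : Forest S → Forest S → Prop) : Prop :=
  ∀ f g h : Forest S, Forest.leaves f = g.length → Forest.leaves f = h.length →
    E (Forest.comp f g) (Forest.comp f h) → E g h

/-- Ore's property for the forest-skein category given by the equivalence `E`:
any two forests with the same number of roots admit a common right multiple. -/
def OreProp {S : Type} (E : Forest S → Forest S → Prop) : Prop :=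
  ∀ f g : Forest S, f.length = g.length →
    ∃ p q : Forest S, Forest.leaves f = p.length ∧ Forest.leaves g = q.length ∧
      E (Forest.comp f p) (Forest.comp g q)

/-- Equality of the fractions `t ∘ s⁻¹` and `t' ∘ s'⁻¹` in the fraction group:
there are forests `f, f'` with `t ∘ f = t' ∘ f'` and `s ∘ f = s' ∘ f'` modulo `E`. -/
def FracRel {S : Type} (E : Forest S → Forest S → Prop) (t s t' s' : CTree S) : Prop :=
  ∃ f f' : Forest S, CTree.leaves t = f.length ∧ CTree.leaves t' = f'.length ∧
    E [CTree.graft t f] [CTree.graft t' f'] ∧ E [CTree.graft s f] [CTree.graft s' f']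

/-- `BuiltFrom t z`: all the "carets" of `z` are copies of the tree `t`. -/
inductive BuiltFrom {S : Type} (t : CTree S) : CTree S → Prop
  | leaf : BuiltFrom t CTree.leaf
  | graft (gs : List (CTree S)) (h : CTree.leaves t = gs.length)
      (hgs : ∀ g ∈ gs, BuiltFrom t g) : BuiltFrom t (CTree.graft t gs)

section Aux
variable {S : Type}
open CTree

lemma one_le_leaves (u : CTree S) : 1 ≤ u.leaves := by
  induction u with
  | leaf => simp [CTree.leaves]
  | node c l r ihl ihr => simp only [CTree.leaves]; omega

lemma leaves_recolour {S' : Type} (c : S → S') (u : CTree S) :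
    (CTree.recolour c u).leaves = u.leaves := by
  induction u with
  | leaf => rfl
  | node x l r ihl ihr => simp [CTree.recolour, CTree.leaves, ihl, ihr]

lemma Forest.leaves_append (p q : Forest S) :
    Forest.leaves (p ++ q) = Forest.leaves p + Forest.leaves q := by
  simp [Forest.leaves]

lemma Forest.leaves_cons (a : CTree S) (p : Forest S) :
    Forest.leaves (a :: p) = a.leaves + Forest.leaves p := by
  simp [Forest.leaves]

lemma leaves_graft (u : CTree S) (gs : Forest S) :
    (CTree.graft u gs).leaves
      = Forest.leaves (gs.take u.leaves) + (u.leaves - gs.length) := by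
  induction u generalizing gs with
  | leaf =>
    cases gs with
    | nil => simp [CTree.graft, CTree.leaves, Forest.leaves]
    | cons x xs => simp [CTree.graft, CTree.leaves, Forest.leaves]
  | node c l r ihl ihr =>
    simp only [CTree.graft, CTree.leaves, ihl, ihr, List.take_take,
      List.length_take, List.length_drop]
    have h1 : Forest.leaves (gs.take l.leaves)
        + Forest.leaves ((gs.drop l.leaves).take r.leaves)
        = Forest.leaves (gs.take (l.leaves + r.leaves)) := by
      rw [List.take_add, Forest.leaves_append]
    simp only [min_self]
    omega

lemma leaves_graft_full (u : CTree S) (gs : Forest S) (h : gs.length = u.leaves) :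
    (CTree.graft u gs).leaves = Forest.leaves gs := by
  rw [leaves_graft, ← h, List.take_length]
  omega

lemma graft_take (u : CTree S) (gs : Forest S) :
    CTree.graft u (gs.take u.leaves) = CTree.graft u gs := by
  induction u generalizing gs with
  | leaf => cases gs <;> rfl
  | node c l r ihl ihr =>
    simp only [CTree.graft, CTree.leaves, List.take_take, min_self]
    rw [Nat.min_eq_left (Nat.le_add_right _ _), List.drop_take,
      Nat.add_sub_cancel_left, ihl, ihr]

lemma drop_take' (l : Forest S) (m k : ℕ) : (l.take (m+k)).drop m = (l.drop m).take k := by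
  rw [List.drop_take]; congr 1; omega

lemma comp_length (f g : Forest S) : (Forest.comp f g).length = f.length := by
  induction f generalizing g with
  | nil => rfl
  | cons t ts ih => simp [Forest.comp, ih]

lemma comp_append (p q h : Forest S) :
    Forest.comp (p ++ q) h
      = Forest.comp p (h.take (Forest.leaves p)) ++ Forest.comp q (h.drop (Forest.leaves p)) := by
  induction p generalizing h with
  | nil => simp [Forest.comp, Forest.leaves]
  | cons t ts ih =>
    show CTree.graft t (h.take t.leaves) :: Forest.comp (ts ++ q) (h.drop t.leaves) = _
    rw [ih, Forest.leaves_cons]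
    show _ = CTree.graft t ((h.take (t.leaves + Forest.leaves ts)).take t.leaves)
        :: (Forest.comp ts ((h.take (t.leaves + Forest.leaves ts)).drop t.leaves)
        ++ Forest.comp q (h.drop (t.leaves + Forest.leaves ts)))
    rw [List.take_take, Nat.min_eq_left (Nat.le_add_right _ _), drop_take', ← List.drop_drop]

lemma comp_singleton (u : CTree S) (h : Forest S) :
    Forest.comp [u] h = [CTree.graft u (h.take u.leaves)] := rfl

lemma graft_graft (u : CTree S) (f : Forest S) (hf : f.length = u.leaves) (h : Forest S) :
    CTree.graft (CTree.graft u f) h = CTree.graft u (Forest.comp f h) := by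
  induction u generalizing f h with
  | leaf =>
    match f, hf with
    | [x], _ =>
      show CTree.graft x h = _
      rw [comp_singleton]
      show _ = CTree.graft x (h.take x.leaves)
      rw [graft_take]
  | node c l r ihl ihr =>
    have hf' : f.length = l.leaves + r.leaves := hf
    have hfl : (f.take l.leaves).length = l.leaves := by
      simp [List.length_take]; omega
    have hfr : (f.drop l.leaves).length = r.leaves := by
      simp [List.length_drop]; omega
    have h1 : (Forest.comp (f.take l.leaves) (h.take (Forest.leaves (f.take l.leaves)))).length
        = l.leaves := by rw [comp_length, hfl]
    have hsplit : Forest.comp f h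
        = Forest.comp (f.take l.leaves) (h.take (Forest.leaves (f.take l.leaves)))
          ++ Forest.comp (f.drop l.leaves) (h.drop (Forest.leaves (f.take l.leaves))) := by
      conv_lhs => rw [← List.take_append_drop l.leaves f]
      rw [comp_append]
    calc CTree.graft (CTree.graft (CTree.node c l r) f) h
        = CTree.node c
            (CTree.graft (CTree.graft l (f.take l.leaves))
              (h.take (Forest.leaves (f.take l.leaves))))
            (CTree.graft (CTree.graft r (f.drop l.leaves))
              (h.drop (Forest.leaves (f.take l.leaves)))) := by
          simp only [CTree.graft, leaves_graft_full _ _ hfl]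
      _ = CTree.node c
            (CTree.graft l (Forest.comp (f.take l.leaves) (h.take (Forest.leaves (f.take l.leaves)))))
            (CTree.graft r (Forest.comp (f.drop l.leaves) (h.drop (Forest.leaves (f.take l.leaves))))) := by
          rw [ihl _ hfl, ihr _ hfr]
      _ = CTree.graft (CTree.node c l r) (Forest.comp f h) := by
          rw [hsplit]
          show _ = CTree.node c (CTree.graft l _) (CTree.graft r _)
          rw [List.take_left' h1, List.drop_left' h1]

lemma Forest.leaves_replicate (k : ℕ) (x : CTree S) :
    Forest.leaves (List.replicate k x) = k * x.leaves := by
  simp [Forest.leaves, List.map_replicate, List.sum_replicate, smul_eq_mul]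

lemma graft_rep_leaf (u : CTree S) :
    CTree.graft u (List.replicate u.leaves CTree.leaf) = u := by
  induction u with
  | leaf => rfl
  | node c l r ihl ihr =>
    show CTree.node c
      (CTree.graft l ((List.replicate (l.leaves + r.leaves) CTree.leaf).take l.leaves))
      (CTree.graft r ((List.replicate (l.leaves + r.leaves) CTree.leaf).drop l.leaves)) = _
    rw [List.take_replicate, List.drop_replicate, Nat.min_eq_left (Nat.le_add_right _ _),
      Nat.add_sub_cancel_left, ihl, ihr]

lemma comp_replicate (z y : CTree S) (k : ℕ) :
    Forest.comp (List.replicate k z) (List.replicate (k * z.leaves) y)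
      = List.replicate k (CTree.graft z (List.replicate z.leaves y)) := by
  induction k with
  | zero => rfl
  | succ k ih =>
    rw [List.replicate_succ, List.replicate_succ]
    show CTree.graft z ((List.replicate ((k+1) * z.leaves) y).take z.leaves)
        :: Forest.comp (List.replicate k z) ((List.replicate ((k+1) * z.leaves) y).drop z.leaves)
      = _
    rw [List.take_replicate, List.drop_replicate,
      Nat.min_eq_left (by nlinarith : z.leaves ≤ (k+1) * z.leaves),
      show (k+1) * z.leaves - z.leaves = k * z.leaves by ring_nf; omega, ih]

/-- The complete tree of depth `e` built from the `n`-leaved caret `tc`. -/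
def mcomp (tc : CTree S) (n : ℕ) : ℕ → CTree S
  | 0 => CTree.leaf
  | e+1 => CTree.graft tc (List.replicate n (mcomp tc n e))

lemma leaves_mcomp (tc : CTree S) {n : ℕ} (hn : tc.leaves = n) (e : ℕ) :
    (mcomp tc n e).leaves = n ^ e := by
  induction e with
  | zero => rfl
  | succ e ih =>
    rw [mcomp, leaves_graft_full _ _ (by simp [hn]), Forest.leaves_replicate, ih,
      pow_succ, Nat.mul_comm]

lemma built_mcomp (tc : CTree S) {n : ℕ} (hn : tc.leaves = n) (e : ℕ) :
    BuiltFrom tc (mcomp tc n e) := by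
  induction e with
  | zero => exact BuiltFrom.leaf
  | succ e ih =>
    exact BuiltFrom.graft _ (by simp [hn]) (fun g hg => by
      rw [List.eq_of_mem_replicate hg]; exact ih)

lemma mcomp_succ_graft (tc : CTree S) {n : ℕ} (hn : tc.leaves = n) (e : ℕ) :
    CTree.graft (mcomp tc n e) (List.replicate (mcomp tc n e).leaves tc)
      = mcomp tc n (e+1) := by
  induction e with
  | zero =>
    show CTree.graft CTree.leaf [tc] = CTree.graft tc (List.replicate n CTree.leaf)
    rw [← hn, graft_rep_leaf]
    rfl
  | succ e ih =>
    rw [show mcomp tc n (e+1) = CTree.graft tc (List.replicate n (mcomp tc n e)) from rfl,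
      graft_graft _ _ (by simp [hn]) _]
    rw [leaves_graft_full _ _ (by simp [hn]), Forest.leaves_replicate]
    rw [comp_replicate, ih]
    rfl

/-- Monochromatic trees of colour `c`. -/
def Mono (c : S) : CTree S → Prop
  | .leaf => True
  | .node x l r => x = c ∧ Mono c l ∧ Mono c r

/-- Height of a tree. -/
def height : CTree S → ℕ
  | .leaf => 0
  | .node _ l r => max (height l) (height r) + 1

/-- Complete binary monochromatic tree of colour `c` and depth `e`. -/
def bcomp (c : S) : ℕ → CTree S
  | 0 => .leaf
  | e+1 => .node c (bcomp c e) (bcomp c e)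

/-- `u` is obtained from `v` by deleting subtrees ("`u` is a prefix of `v`"). -/
def PrefixOf : CTree S → CTree S → Prop
  | .leaf, _ => True
  | .node _ _ _, .leaf => False
  | .node c l r, .node c' l' r' => c = c' ∧ PrefixOf l l' ∧ PrefixOf r r'

lemma mono_recolour (c : S) (x : CTree Unit) :
    Mono c (CTree.recolour (fun _ => c) x) := by
  induction x with
  | leaf => trivial
  | node y l r ihl ihr => exact ⟨rfl, ihl, ihr⟩

lemma mono_graft {c : S} {u : CTree S} {gs : Forest S}
    (hu : Mono c u) (hgs : ∀ x ∈ gs, Mono c x) : Mono c (CTree.graft u gs) := by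
  induction u generalizing gs with
  | leaf =>
    cases gs with
    | nil => trivial
    | cons x xs => exact hgs x List.mem_cons_self
  | node d l r ihl ihr =>
    exact ⟨hu.1, ihl hu.2.1 (fun x hx => hgs x (List.take_subset _ _ hx)),
      ihr hu.2.2 (fun x hx => hgs x (List.drop_subset _ _ hx))⟩

lemma mono_mcomp {c : S} {tc : CTree S} (h : Mono c tc) (n e : ℕ) :
    Mono c (mcomp tc n e) := by
  induction e with
  | zero => trivial
  | succ e ih =>
    exact mono_graft h (fun x hx => by rw [List.eq_of_mem_replicate hx]; exact ih)

lemma prefix_trans : ∀ {a b c : CTree S}, PrefixOf a b → PrefixOf b c → PrefixOf a c := by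
  intro a
  induction a with
  | leaf => intro b c _ _; trivial
  | node d l r ihl ihr =>
    intro b c hab hbc
    cases b with
    | leaf => exact absurd hab (by simp [PrefixOf])
    | node d' l' r' =>
      cases c with
      | leaf => exact absurd hbc (by simp [PrefixOf])
      | node d'' l'' r'' =>
        obtain ⟨h1, h2, h3⟩ := hab
        obtain ⟨h1', h2', h3'⟩ := hbc
        exact ⟨h1.trans h1', ihl h2 h2', ihr h3 h3'⟩

lemma prefix_bcomp_of_height {c : S} : ∀ (u : CTree S), Mono c u → ∀ e, height u ≤ e →
    PrefixOf u (bcomp c e) := by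
  intro u
  induction u with
  | leaf => intro _ e _; trivial
  | node d l r ihl ihr =>
    intro hM e he
    cases e with
    | zero => simp [height] at he
    | succ e =>
      have h1 : height l ≤ e := by simp [height] at he; omega
      have h2 : height r ≤ e := by simp [height] at he; omega
      exact ⟨hM.1, ihl hM.2.1 e h1, ihr hM.2.2 e h2⟩

lemma prefix_bcomp_le {c : S} : ∀ {e e' : ℕ}, e ≤ e' → PrefixOf (bcomp c e) (bcomp c e') := by
  intro e
  induction e with
  | zero => intro e' _; trivial
  | succ e ih =>
    intro e' h
    cases e' with
    | zero => omega
    | succ e' => exact ⟨rfl, ih (by omega), ih (by omega)⟩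

lemma prefix_bcomp_graft {c : S} :
    ∀ (w : CTree S) (e : ℕ) (gs : Forest S), Mono c w → gs.length = w.leaves →
      (∀ x ∈ gs, PrefixOf (bcomp c e) x) → PrefixOf (bcomp c e) (CTree.graft w gs) := by
  intro w
  induction w with
  | leaf =>
    intro e gs _ hlen hgs
    match gs, hlen with
    | [x], _ => exact hgs x List.mem_cons_self
  | node d l r ihl ihr =>
    intro e gs hM hlen hgs
    cases e with
    | zero => trivial
    | succ e =>
      have hlen' : gs.length = l.leaves + r.leaves := hlen
      refine ⟨hM.1.symm, ?_, ?_⟩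
      · exact ihl e _ hM.2.1 (by simp [List.length_take]; omega)
          (fun x hx => prefix_trans (prefix_bcomp_le (Nat.le_succ e))
            (hgs x (List.take_subset _ _ hx)))
      · exact ihr e _ hM.2.2 (by simp [List.length_drop]; omega)
          (fun x hx => prefix_trans (prefix_bcomp_le (Nat.le_succ e))
            (hgs x (List.drop_subset _ _ hx)))

lemma prefix_bcomp_graft_succ {c : S} {d : S} {A B : CTree S} {e : ℕ} {gs : Forest S}
    (hM : Mono c (CTree.node d A B)) (hlen : gs.length = (CTree.node d A B).leaves)
    (hgs : ∀ x ∈ gs, PrefixOf (bcomp c e) x) :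
    PrefixOf (bcomp c (e+1)) (CTree.graft (CTree.node d A B) gs) := by
  have hlen' : gs.length = A.leaves + B.leaves := hlen
  refine ⟨hM.1.symm, ?_, ?_⟩
  · exact prefix_bcomp_graft A e _ hM.2.1 (by simp [List.length_take]; omega)
      (fun x hx => hgs x (List.take_subset _ _ hx))
  · exact prefix_bcomp_graft B e _ hM.2.2 (by simp [List.length_drop]; omega)
      (fun x hx => hgs x (List.drop_subset _ _ hx))

lemma prefix_bcomp_mcomp {c : S} {tc : CTree S} {n : ℕ} (hM : Mono c tc)
    (hne : tc ≠ CTree.leaf) (hn : tc.leaves = n) (e : ℕ) :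
    PrefixOf (bcomp c e) (mcomp tc n e) := by
  induction e with
  | zero => trivial
  | succ e ih =>
    obtain ⟨d, A, B, rfl⟩ : ∃ d A B, tc = CTree.node d A B := by
      cases tc with
      | leaf => exact absurd rfl hne
      | node d A B => exact ⟨d, A, B, rfl⟩
    exact prefix_bcomp_graft_succ hM (by simp [hn]) (fun x hx => by
      rw [List.eq_of_mem_replicate hx]; exact ih)

lemma prefix_graft_exists : ∀ {u v : CTree S}, PrefixOf u v →
    ∃ g : Forest S, g.length = u.leaves ∧ CTree.graft u g = v := by
  intro u
  induction u with
  | leaf => intro v _; exact ⟨[v], rfl, rfl⟩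
  | node d l r ihl ihr =>
    intro v hp
    cases v with
    | leaf => exact absurd hp (by simp [PrefixOf])
    | node d' L R =>
      obtain ⟨hc, hL, hR⟩ := hp
      obtain ⟨gL, hgL, hgL2⟩ := ihl hL
      obtain ⟨gR, hgR, hgR2⟩ := ihr hR
      refine ⟨gL ++ gR, by simp [CTree.leaves, hgL, hgR], ?_⟩
      subst hc
      show CTree.node d (CTree.graft l ((gL ++ gR).take l.leaves))
        (CTree.graft r ((gL ++ gR).drop l.leaves)) = _
      rw [← hgL, List.take_left, List.drop_left, hgL2, hgR2]

lemma Forest.leaves_eq_sum_map (f : Forest S) : Forest.leaves f = (f.map CTree.leaves).sum := rfl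

lemma comp_map_leaves : ∀ (f f' g g' : Forest S),
    f.map CTree.leaves = f'.map CTree.leaves → g.map CTree.leaves = g'.map CTree.leaves →
    (Forest.comp f g).map CTree.leaves = (Forest.comp f' g').map CTree.leaves := by
  intro f
  induction f with
  | nil =>
    intro f' g g' hf _
    cases f' with
    | nil => rfl
    | cons _ _ => simp at hf
  | cons t ts ih =>
    intro f' g g' hf hg
    cases f' with
    | nil => simp at hf
    | cons t' ts' =>
      simp only [List.map_cons, List.cons.injEq] at hf
      obtain ⟨ht, hts⟩ := hf
      have hlen : g.length = g'.length := by
        have := congrArg List.length hg; simpa using this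
      have htk : (g.take t.leaves).map CTree.leaves = (g'.take t.leaves).map CTree.leaves := by
        rw [List.map_take, List.map_take, hg]
      have hdr : (g.drop t.leaves).map CTree.leaves = (g'.drop t.leaves).map CTree.leaves := by
        rw [List.map_drop, List.map_drop, hg]
      simp only [Forest.comp, List.map_cons]
      rw [leaves_graft, leaves_graft, List.take_take, List.take_take, min_self, min_self, ← ht]
      congr 1
      · rw [Forest.leaves_eq_sum_map, Forest.leaves_eq_sum_map, htk,
          List.length_take, List.length_take, hlen]
      · exact ih ts' _ _ hts hdr

lemma skein_map_leaves {R : CTree S → CTree S → Prop} (hR : LeafPres R)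
    {f g : Forest S} (h : SkeinEquiv R f g) : f.map CTree.leaves = g.map CTree.leaves := by
  induction h with
  | of hr => simp [hR _ _ hr]
  | refl f => rfl
  | symm _ ih => exact ih.symm
  | trans _ _ ih1 ih2 => exact ih1.trans ih2
  | comp _ _ ih1 ih2 => exact comp_map_leaves _ _ _ _ ih1 ih2
  | tensor _ _ ih1 ih2 => simp only [List.map_append, ih1, ih2]

lemma skein_length {R : CTree S → CTree S → Prop} (hR : LeafPres R)
    {f g : Forest S} (h : SkeinEquiv R f g) : f.length = g.length := by
  have := congrArg List.length (skein_map_leaves hR h); simpa using this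

lemma skein_leaves_single {R : CTree S → CTree S → Prop} (hR : LeafPres R)
    {a b : CTree S} (h : SkeinEquiv R [a] [b]) : a.leaves = b.leaves := by
  have := skein_map_leaves hR h; simpa using this

lemma skein_rep {R : CTree S → CTree S → Prop} {a b : CTree S}
    (h : SkeinEquiv R [a] [b]) : ∀ k, SkeinEquiv R (List.replicate k a) (List.replicate k b) := by
  intro k
  induction k with
  | zero => exact SkeinEquiv.refl []
  | succ k ih =>
    rw [List.replicate_succ, List.replicate_succ]
    exact SkeinEquiv.tensor h ih

lemma node_congr {R : CTree S → CTree S → Prop} (c : S) {u u' v v' : CTree S}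
    (h1 : SkeinEquiv R [u] [u']) (h2 : SkeinEquiv R [v] [v']) :
    SkeinEquiv R [CTree.node c u v] [CTree.node c u' v'] := by
  have h := SkeinEquiv.comp (SkeinEquiv.refl [CTree.node c CTree.leaf CTree.leaf])
    (SkeinEquiv.tensor h1 h2)
  have heq : ∀ x y : CTree S,
      Forest.comp [CTree.node c CTree.leaf CTree.leaf] ([x] ++ [y]) = [CTree.node c x y] :=
    fun x y => rfl
  rwa [heq, heq] at h

lemma graft_congr_right {R : CTree S → CTree S → Prop} {a b : CTree S}
    (h : SkeinEquiv R [a] [b]) (hl : a.leaves = b.leaves) (g : Forest S)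
    (hg : g.length = a.leaves) : SkeinEquiv R [CTree.graft a g] [CTree.graft b g] := by
  have h2 := SkeinEquiv.comp h (SkeinEquiv.refl g)
  rw [comp_singleton, comp_singleton, ← hg, ← hl, ← hg, List.take_length] at h2
  exact h2

lemma skein_mcomp_congr {R : CTree S → CTree S → Prop} {t tc : CTree S} {n : ℕ}
    (ht : t.leaves = n) (htc : tc.leaves = n) (h : SkeinEquiv R [t] [tc]) :
    ∀ D, SkeinEquiv R [mcomp t n D] [mcomp tc n D] := by
  intro D
  induction D with
  | zero => exact SkeinEquiv.refl _
  | succ D ih =>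
    have h2 := SkeinEquiv.comp h (skein_rep ih n)
    simp only [comp_singleton, ht, htc, List.take_replicate, min_self] at h2
    exact h2

lemma skein_bump {R : CTree S → CTree S → Prop} (hR : LeafPres R) {t : CTree S} {n : ℕ}
    (ht : t.leaves = n) {s : CTree S} {D : ℕ} {f : Forest S} (hf : f.length = s.leaves)
    (h : SkeinEquiv R [CTree.graft s f] [mcomp t n D]) :
    ∃ f' : Forest S, f'.length = s.leaves ∧
      SkeinEquiv R [CTree.graft s f'] [mcomp t n (D+1)] := by
  have hl : (CTree.graft s f).leaves = (mcomp t n D).leaves := skein_leaves_single hR h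
  have h2 := graft_congr_right h hl (List.replicate (mcomp t n D).leaves t)
    (by simp [hl])
  rw [graft_graft s f hf, mcomp_succ_graft t ht D] at h2
  exact ⟨Forest.comp f (List.replicate (mcomp t n D).leaves t), by rw [comp_length, hf], h2⟩

lemma skein_bump_le {R : CTree S → CTree S → Prop} (hR : LeafPres R) {t : CTree S} {n : ℕ}
    (ht : t.leaves = n) {s : CTree S} {D D' : ℕ} (hD : D ≤ D')
    (h : ∃ f : Forest S, f.length = s.leaves ∧ SkeinEquiv R [CTree.graft s f] [mcomp t n D]) :
    ∃ f : Forest S, f.length = s.leaves ∧ SkeinEquiv R [CTree.graft s f] [mcomp t n D'] := by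
  induction D' , hD using Nat.le_induction with
  | base => exact h
  | succ D' _ ih =>
    obtain ⟨f, hf, hE⟩ := ih
    exact skein_bump hR ht hf hE

end Aux

section Main

variable {S : Type}

/-- The skein relation of `F_τ`. -/
def Rtau (τ : S → CTree Unit) : CTree S → CTree S → Prop :=
  fun u v => ∃ x y : S, x ≠ y ∧
    u = CTree.recolour (fun _ => x) (τ x) ∧ v = CTree.recolour (fun _ => y) (τ y)

lemma Rtau_leafpres (τ : S → CTree Unit) {n : ℕ} (hlv : ∀ a : S, CTree.leaves (τ a) = n) :
    LeafPres (Rtau τ) := by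
  rintro t t' ⟨x, y, -, rfl, rfl⟩
  rw [leaves_recolour, leaves_recolour, hlv, hlv]

lemma main_claim (a₀ : S) (τ : S → CTree Unit) (hnt : ∀ a : S, τ a ≠ CTree.leaf)
    (n : ℕ) (hlv : ∀ a : S, CTree.leaves (τ a) = n) (s : CTree S) :
    ∃ (D : ℕ) (f : Forest S), f.length = s.leaves ∧
      SkeinEquiv (Rtau τ) [CTree.graft s f]
        [mcomp (CTree.recolour (fun _ => a₀) (τ a₀)) n D] := by
  have hR : LeafPres (Rtau τ) := Rtau_leafpres τ hlv
  have hlt : ∀ c : S, (CTree.recolour (fun _ => c) (τ c)).leaves = n := fun c => by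
    rw [leaves_recolour, hlv]
  set tA := CTree.recolour (fun _ => a₀) (τ a₀) with htAdef
  have hrel : ∀ c : S, SkeinEquiv (Rtau τ) [tA] [CTree.recolour (fun _ => c) (τ c)] := by
    intro c
    by_cases hc : c = a₀
    · subst hc; exact SkeinEquiv.refl _
    · exact SkeinEquiv.of ⟨a₀, c, fun h => hc h.symm, rfl, rfl⟩
  induction s with
  | leaf => exact ⟨0, [CTree.leaf], rfl, SkeinEquiv.refl [CTree.leaf]⟩
  | node c l r ihl ihr =>
    obtain ⟨Dl, fl0, hfl0, hEl0⟩ := ihl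
    obtain ⟨Dr, fr0, hfr0, hEr0⟩ := ihr
    obtain ⟨fl, hfl, hEl⟩ := skein_bump_le hR (hlt a₀) (Nat.le_max_left Dl Dr) ⟨fl0, hfl0, hEl0⟩
    obtain ⟨fr, hfr, hEr⟩ := skein_bump_le hR (hlt a₀) (Nat.le_max_right Dl Dr) ⟨fr0, hfr0, hEr0⟩
    set D := max Dl Dr with hDdef
    set tc := CTree.recolour (fun _ => c) (τ c) with htcdef
    have hgraft : CTree.graft (CTree.node c l r) (fl ++ fr)
        = CTree.node c (CTree.graft l fl) (CTree.graft r fr) := by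
      show CTree.node c (CTree.graft l ((fl ++ fr).take l.leaves))
        (CTree.graft r ((fl ++ fr).drop l.leaves)) = _
      rw [← hfl, List.take_left, List.drop_left]
    have E1 : SkeinEquiv (Rtau τ) [CTree.graft (CTree.node c l r) (fl ++ fr)]
        [CTree.node c (mcomp tA n D) (mcomp tA n D)] := by
      rw [hgraft]; exact node_congr c hEl hEr
    have E2 : SkeinEquiv (Rtau τ) [CTree.node c (mcomp tA n D) (mcomp tA n D)]
        [CTree.node c (mcomp tc n D) (mcomp tc n D)] :=
      node_congr c (skein_mcomp_congr (hlt a₀) (hlt c) (hrel c) D)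
        (skein_mcomp_congr (hlt a₀) (hlt c) (hrel c) D)
    set u := CTree.node c (mcomp tc n D) (mcomp tc n D) with hudef
    have hmonotc : Mono c tc := mono_recolour c (τ c)
    have hmono : Mono c u := ⟨rfl, mono_mcomp hmonotc n D, mono_mcomp hmonotc n D⟩
    have htcne : tc ≠ CTree.leaf := by
      rw [htcdef]
      cases hτ : τ c with
      | leaf => exact absurd hτ (hnt c)
      | node x a b =>
        simp only [CTree.recolour]
        exact fun h => by cases h
    have hp : PrefixOf u (mcomp tc n (height u)) :=
      prefix_trans (prefix_bcomp_of_height u hmono _ le_rfl)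
        (prefix_bcomp_mcomp hmonotc htcne (hlt c) (height u))
    obtain ⟨g, hg, hgr⟩ := prefix_graft_exists hp
    have E3 : SkeinEquiv (Rtau τ) [CTree.graft (CTree.node c l r) (fl ++ fr)] [u] :=
      E1.trans E2
    have hl3 : (CTree.graft (CTree.node c l r) (fl ++ fr)).leaves = u.leaves :=
      skein_leaves_single hR E3
    have E4 := graft_congr_right E3 hl3 g (by rw [hg, hl3])
    have hFlen : (fl ++ fr).length = (CTree.node c l r).leaves := by
      show _ = l.leaves + r.leaves
      simp [hfl, hfr]
    rw [graft_graft _ _ hFlen, hgr] at E4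
    exact ⟨height u, Forest.comp (fl ++ fr) g, by rw [comp_length, hFlen],
      E4.trans (skein_mcomp_congr (hlt a₀) (hlt c) (hrel c) (height u)).symm⟩

lemma main_pair (a₀ : S) (τ : S → CTree Unit) (hnt : ∀ a : S, τ a ≠ CTree.leaf)
    (n : ℕ) (hlv : ∀ a : S, CTree.leaves (τ a) = n) (s₁ s₂ : CTree S) :
    ∃ (D : ℕ) (f₁ f₂ : Forest S), f₁.length = s₁.leaves ∧ f₂.length = s₂.leaves ∧
      SkeinEquiv (Rtau τ) [CTree.graft s₁ f₁]
        [mcomp (CTree.recolour (fun _ => a₀) (τ a₀)) n D] ∧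
      SkeinEquiv (Rtau τ) [CTree.graft s₂ f₂]
        [mcomp (CTree.recolour (fun _ => a₀) (τ a₀)) n D] := by
  have hR : LeafPres (Rtau τ) := Rtau_leafpres τ hlv
  have htA : (CTree.recolour (fun _ => a₀) (τ a₀)).leaves = n := by
    rw [leaves_recolour, hlv]
  obtain ⟨D₁, f₁, hf₁, hE₁⟩ := main_claim a₀ τ hnt n hlv s₁
  obtain ⟨D₂, f₂, hf₂, hE₂⟩ := main_claim a₀ τ hnt n hlv s₂
  obtain ⟨g₁, hg₁, hEg₁⟩ := skein_bump_le hR htA (Nat.le_max_left D₁ D₂) ⟨f₁, hf₁, hE₁⟩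
  obtain ⟨g₂, hg₂, hEg₂⟩ := skein_bump_le hR htA (Nat.le_max_right D₁ D₂) ⟨f₂, hf₂, hE₂⟩
  exact ⟨max D₁ D₂, g₁, g₂, hg₁, hg₂, hEg₁, hEg₂⟩

lemma ore_aux (a₀ : S) (τ : S → CTree Unit) (hnt : ∀ a : S, τ a ≠ CTree.leaf)
    (n : ℕ) (hlv : ∀ a : S, CTree.leaves (τ a) = n) :
    ∀ f g : Forest S, f.length = g.length →
      ∃ p q : Forest S, Forest.leaves f = p.length ∧ Forest.leaves g = q.length ∧
        SkeinEquiv (Rtau τ) (Forest.comp f p) (Forest.comp g q) := by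
  intro f
  induction f with
  | nil =>
    intro g hg
    cases g with
    | nil => exact ⟨[], [], rfl, rfl, SkeinEquiv.refl []⟩
    | cons b g' => simp at hg
  | cons a f' ih =>
    intro g hg
    cases g with
    | nil => simp at hg
    | cons b g' =>
      obtain ⟨D, pa, qb, hpa, hqb, hEa, hEb⟩ := main_pair a₀ τ hnt n hlv a b
      obtain ⟨p', q', hp', hq', hE'⟩ := ih g' (by simpa using hg)
      refine ⟨pa ++ p', qb ++ q', ?_, ?_, ?_⟩
      · rw [Forest.leaves_cons, List.length_append, hpa, hp']
      · rw [Forest.leaves_cons, List.length_append, hqb, hq']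
      · have hcomp1 : Forest.comp (a :: f') (pa ++ p')
            = [CTree.graft a pa] ++ Forest.comp f' p' := by
          show CTree.graft a ((pa ++ p').take a.leaves)
            :: Forest.comp f' ((pa ++ p').drop a.leaves) = _
          rw [← hpa, List.take_left, List.drop_left]
          rfl
        have hcomp2 : Forest.comp (b :: g') (qb ++ q')
            = [CTree.graft b qb] ++ Forest.comp g' q' := by
          show CTree.graft b ((qb ++ q').take b.leaves)
            :: Forest.comp g' ((qb ++ q').drop b.leaves) = _
          rw [← hqb, List.take_left, List.drop_left]
          rfl
        rw [hcomp1, hcomp2]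
        exact SkeinEquiv.tensor (hEa.trans hEb.symm) hE'

end Main


/-- for a family `τ : S → {nontrivial monochromatic trees}` with a
common number of leaves `n ≥ 2`, the forest-skein category `F_τ` presented by the
skein relations `C_a(τ_a) = C_b(τ_b)` (for `a ≠ b`) satisfies Ore's property:
every tree is dominated by a tree all of whose carets are copies of the common
tree `t = C_{a₀}(τ_{a₀})`. -/
theorem Ftau_ore {S : Type} (a₀ : S) (τ : S → CTree Unit)
    (hnt : ∀ a : S, τ a ≠ CTree.leaf)
    (n : ℕ) (hn : 2 ≤ n) (hlv : ∀ a : S, CTree.leaves (τ a) = n) :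
    (∀ s : CTree S, ∃ (z : CTree S) (f : Forest S),
        BuiltFrom (CTree.recolour (fun _ => a₀) (τ a₀)) z ∧
        CTree.leaves s = f.length ∧
        SkeinEquiv (fun u v => ∃ x y : S, x ≠ y ∧
            u = CTree.recolour (fun _ => x) (τ x) ∧
            v = CTree.recolour (fun _ => y) (τ y))
          [CTree.graft s f] [z])
    ∧ OreProp (SkeinEquiv (fun u v => ∃ x y : S, x ≠ y ∧
        u = CTree.recolour (fun _ => x) (τ x) ∧
        v = CTree.recolour (fun _ => y) (τ y))) := by
  have htA : (CTree.recolour (fun _ => a₀) (τ a₀)).leaves = n := by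
    rw [leaves_recolour, hlv]
  constructor
  · intro s
    obtain ⟨D, f, hf, hE⟩ := main_claim a₀ τ hnt n hlv s
    exact ⟨mcomp (CTree.recolour (fun _ => a₀) (τ a₀)) n D, f, built_mcomp _ htA D,
      hf.symm, hE⟩
  · exact ore_aux a₀ τ hnt n hlv

end ForestSkein
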